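/- arXiv:2301.10261 — 4 statements merged into one kernel-verified Lean document; each statement's English description precedes it below -/
import Mathlib

section
/- For a full matrix algebra M_d(ℂ) with d ≥ 2, any quantum channel (completely positive trace-preserving map) E : M_d(ℂ) → M_d(ℂ) ⊗ M_n(ℂ) satisfying Tr_C ∘ E = id_{M_d(ℂ)} (a non-disturbing measurement, i.e., a leak) must factorize as E(ρ) = ρ ⊗ χ for a fixed density operator χ independent of ρ. -/
open Matrix Kronecker BigOperators
open scoped ComplexOrder

noncomputable section

/-- Partial trace over the second tensor factor. -/
def ptr2 {α β : Type*} [Fintype β] (M : Matrix (α × β) (α × β) ℂ) :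
    Matrix α α ℂ := fun i j => ∑ k, M (i, k) (j, k)

/-- Partial trace over the first tensor factor. -/
def ptr1 {α β : Type*} [Fintype α] (M : Matrix (α × β) (α × β) ℂ) :
    Matrix β β ℂ := fun i j => ∑ k, M (k, i) (k, j)

/-- The rank-one projector `|x⟩⟨x|` onto the `x`-th standard basis vector. -/
def ex {n : ℕ} (x : Fin n) : Matrix (Fin n) (Fin n) ℂ :=
  Matrix.single x x 1

/-- A density matrix: positive semidefinite with unit trace. -/
def IsDensity {α : Type*} [Fintype α] [DecidableEq α] (A : Matrix α α ℂ) : Prop :=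
  A.PosSemidef ∧ A.trace = 1

/-- The Choi matrix of a linear map on matrices; the map is completely positive
iff its Choi matrix is positive semidefinite. -/
def choi {α β : Type*} [Fintype α] [DecidableEq α]
    (E : Matrix α α ℂ →ₗ[ℂ] Matrix β β ℂ) : Matrix (α × β) (α × β) ℂ :=
  fun p q => E (Matrix.single p.1 q.1 1) p.2 q.2

/-- If a finite sum of `star z * z` terms vanishes, each term vanishes. -/
lemma sum_star_mul_self_eq_zero {ι : Type*} [Fintype ι] {f : ι → ℂ}
    (h : ∑ i, star (f i) * f i = 0) (i : ι) : f i = 0 := by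
  have h' : ∑ j, Complex.normSq (f j) = 0 := by
    have hc : ((∑ j, Complex.normSq (f j) : ℝ) : ℂ) = 0 := by
      push_cast
      rw [← h]
      refine Finset.sum_congr rfl fun j _ => ?_
      rw [Complex.normSq_eq_conj_mul_self]
      rfl
    exact_mod_cast hc
  have hz := (Finset.sum_eq_zero_iff_of_nonneg
    (fun j _ => Complex.normSq_nonneg (f j))).mp h' i (Finset.mem_univ i)
  exact Complex.normSq_eq_zero.mp hz

/-- for a full matrix algebra `M_d(ℂ)` with `d ≥ 2`, any quantum channel
(CP and trace-preserving) `E : M_d(ℂ) → M_d(ℂ) ⊗ M_n(ℂ)` with `Tr_C ∘ E = id` (a leak,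
i.e. a non-disturbing measurement) factorizes as `E(ρ) = ρ ⊗ χ` for a fixed density
operator `χ` independent of `ρ`. -/
theorem stmt1 (d n : ℕ) (hd : 2 ≤ d)
    (E : Matrix (Fin d) (Fin d) ℂ →ₗ[ℂ] Matrix (Fin d × Fin n) (Fin d × Fin n) ℂ)
    (hCP : (choi E).PosSemidef)
    (hTP : ∀ A, (E A).trace = A.trace)
    (hLeak : ∀ A, ptr2 (E A) = A) :
    ∃ χ : Matrix (Fin n) (Fin n) ℂ, IsDensity χ ∧
      ∀ ρ, IsDensity ρ → E ρ = ρ ⊗ₖ χ := by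
  classical
  obtain ⟨B, hB⟩ : ∃ B : Matrix (Fin d × Fin d × Fin n) (Fin d × Fin d × Fin n) ℂ, choi E = Bᴴ * B := by
    open scoped MatrixOrder Matrix.Norms.L2Operator in
    obtain ⟨B, hB⟩ := CStarAlgebra.nonneg_iff_eq_star_mul_self.mp hCP.nonneg
    exact ⟨B, hB⟩
  have hd0 : 0 < d := by omega
  set a₀ : Fin d := ⟨0, hd0⟩ with ha₀
  -- entry formula for E on standard basis matrices
  have hC : ∀ (a a' b b' : Fin d) (k k' : Fin n),
      E (single a a' 1) (b, k) (b', k')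
        = ∑ r, star (B r (a, (b, k))) * B r (a', (b', k')) := by
    intro a a' b b' k k'
    have h := congrFun (congrFun hB (a, (b, k))) (a', (b', k'))
    simpa [choi, Matrix.mul_apply, Matrix.conjTranspose_apply] using h
  -- leak condition in entries
  have hL : ∀ (a a' b b' : Fin d),
      (∑ k, ∑ r, star (B r (a, (b, k))) * B r (a', (b', k)))
        = (if a = b ∧ a' = b' then (1 : ℂ) else 0) := by
    intro a a' b b'
    have h1 := congrFun (congrFun (hLeak (single a a' 1)) b) b'
    simp only [ptr2] at h1
    calc (∑ k, ∑ r, star (B r (a, (b, k))) * B r (a', (b', k)))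
        = ∑ k, E (single a a' 1) (b, k) (b', k) := by
          refine Finset.sum_congr rfl fun k _ => (hC a a' b b' k k).symm
      _ = single a a' (1 : ℂ) b b' := h1
      _ = if a = b ∧ a' = b' then 1 else 0 := by
          simp [single]
  -- columns of B at "off-diagonal" indices vanish
  have hzero : ∀ (a b : Fin d) (k : Fin n) (r), a ≠ b → B r (a, (b, k)) = 0 := by
    intro a b k r hab
    have h0 : (∑ p : Fin n × (Fin d × (Fin d × Fin n)),
        star (B p.2 (a, (b, p.1))) * B p.2 (a, (b, p.1))) = 0 := by
      rw [Fintype.sum_prod_type]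
      simpa [hab] using hL a a b b
    exact sum_star_mul_self_eq_zero h0 (k, r)
  -- columns of B at "diagonal" indices are independent of the diagonal position
  have hcol : ∀ (a : Fin d) (k : Fin n) (r), B r (a, (a, k)) = B r (a₀, (a₀, k)) := by
    intro a k r
    have key : (∑ p : Fin n × (Fin d × (Fin d × Fin n)),
        star (B p.2 (a, (a, p.1)) - B p.2 (a₀, (a₀, p.1)))
          * (B p.2 (a, (a, p.1)) - B p.2 (a₀, (a₀, p.1)))) = 0 := by
      rw [Fintype.sum_prod_type]
      have expand : ∀ (k : Fin n) (r : Fin d × (Fin d × Fin n)),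
          star (B r (a, (a, k)) - B r (a₀, (a₀, k)))
            * (B r (a, (a, k)) - B r (a₀, (a₀, k)))
          = star (B r (a, (a, k))) * B r (a, (a, k))
            - star (B r (a, (a, k))) * B r (a₀, (a₀, k))
            - (star (B r (a₀, (a₀, k))) * B r (a, (a, k))
               - star (B r (a₀, (a₀, k))) * B r (a₀, (a₀, k))) := by
        intro k r
        rw [star_sub]
        ring
      calc (∑ k : Fin n, ∑ r, star (B r (a, (a, k)) - B r (a₀, (a₀, k)))
              * (B r (a, (a, k)) - B r (a₀, (a₀, k))))
          = (∑ k : Fin n, ∑ r, star (B r (a, (a, k))) * B r (a, (a, k)))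
            - (∑ k : Fin n, ∑ r, star (B r (a, (a, k))) * B r (a₀, (a₀, k)))
            - ((∑ k : Fin n, ∑ r, star (B r (a₀, (a₀, k))) * B r (a, (a, k)))
               - (∑ k : Fin n, ∑ r, star (B r (a₀, (a₀, k))) * B r (a₀, (a₀, k)))) := by
            simp only [expand, Finset.sum_sub_distrib]
        _ = 0 := by
            rw [hL a a a a, hL a a₀ a a₀, hL a₀ a a₀ a, hL a₀ a₀ a₀ a₀]
            norm_num
    have := sum_star_mul_self_eq_zero key (k, r)
    exact sub_eq_zero.mp this
  -- the fixed ancilla state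
  set Bχ : Matrix (Fin d × (Fin d × Fin n)) (Fin n) ℂ :=
    Matrix.of (fun r k => B r (a₀, (a₀, k))) with hBχ
  have hχapp : ∀ k k', (Bχᴴ * Bχ) k k' = ∑ r, star (B r (a₀, (a₀, k))) * B r (a₀, (a₀, k')) := by
    intro k k'
    simp [Matrix.mul_apply, Matrix.conjTranspose_apply, hBχ]
  refine ⟨Bχᴴ * Bχ, ?_, ?_⟩
  · -- density
    refine ⟨posSemidef_conjTranspose_mul_self Bχ, ?_⟩
    have := hL a₀ a₀ a₀ a₀
    rw [if_pos (And.intro rfl rfl)] at this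
    calc (Bχᴴ * Bχ).trace = ∑ k, (Bχᴴ * Bχ) k k := rfl
      _ = ∑ k, ∑ r, star (B r (a₀, (a₀, k))) * B r (a₀, (a₀, k)) := by
          refine Finset.sum_congr rfl fun k _ => hχapp k k
      _ = 1 := this
  · -- factorization
    intro ρ _
    have hρ : E ρ = ∑ a : Fin d, ∑ a' : Fin d, ρ a a' • E (single a a' 1) := by
      conv_lhs => rw [matrix_eq_sum_single ρ]
      simp only [map_sum]
      refine Finset.sum_congr rfl fun a _ => Finset.sum_congr rfl fun a' _ => ?_
      rw [← LinearMap.map_smul, smul_single, smul_eq_mul, mul_one]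
    ext ⟨b, k⟩ ⟨b', k'⟩
    rw [hρ]
    simp only [Matrix.sum_apply, Matrix.smul_apply, smul_eq_mul, Matrix.kroneckerMap_apply]
    have inner_eval : ∀ a : Fin d,
        (∑ a' : Fin d, ρ a a' * E (single a a' 1) (b, k) (b', k'))
          = if a = b then ρ b b' * E (single b b' 1) (b, k) (b', k') else 0 := by
      intro a
      by_cases hab : a = b
      · rw [if_pos hab, ← hab]
        refine Finset.sum_eq_single b' (fun a' _ ha' => ?_) (fun h => absurd (Finset.mem_univ b') h)
        rw [hC]
        have : ∀ r, star (B r (a, (a, k))) * B r (a', (b', k')) = 0 := by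
          intro r
          rw [hzero a' b' k' r ha', mul_zero]
        rw [Finset.sum_congr rfl fun r _ => this r, Finset.sum_const_zero, mul_zero]
      · rw [if_neg hab]
        refine Finset.sum_eq_zero fun a' _ => ?_
        rw [hC]
        have : ∀ r, star (B r (a, (b, k))) * B r (a', (b', k')) = 0 := by
          intro r
          rw [hzero a b k r hab, star_zero, zero_mul]
        rw [Finset.sum_congr rfl fun r _ => this r, Finset.sum_const_zero, mul_zero]
    rw [Finset.sum_congr rfl fun a _ => inner_eval a, Finset.sum_ite_eq' Finset.univ b
      (fun _ => ρ b b' * E (single b b' 1) (b, k) (b', k')), if_pos (Finset.mem_univ b)]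
    rw [hC, hχapp]
    congr 1
    refine Finset.sum_congr rfl fun r _ => ?_
    rw [hcol b k r, hcol b' k' r]

end
end

section
/- Let R be an invertible channel on CQ(n,d) (classical-quantum states on ℂⁿ ⊗ ℂᵈ) whose inverse R⁻¹ is trace-preserving, and let s = ∑ₓ p(x)|x⟩⟨x| be a fixed classical state. Define E_s(ρ) = Tr_G[(R⁻¹ ⊗ id_C)(m(R(s ⊗ ρ)))], where m copies the classical register G into an ancilla C. Then Tr_C(E_s(ρ)) = ρ for all density matrices ρ on ℂᵈ; i.e., E_s is a non-disturbing measurement of the quantum system. -/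
open Matrix Kronecker BigOperators
open scoped ComplexOrder

noncomputable section

/-- A classical-quantum state on `ℂⁿ ⊗ ℂᵈ`. -/
def IsCQState (n d : ℕ) (M : Matrix (Fin n × Fin d) (Fin n × Fin d) ℂ) : Prop :=
  ∃ (p : Fin n → ℝ) (ρ : Fin n → Matrix (Fin d) (Fin d) ℂ),
    (∀ x, 0 ≤ p x) ∧ (∑ x, p x = 1) ∧ (∀ x, IsDensity (ρ x)) ∧
    M = ∑ x, (p x : ℂ) • (ex x ⊗ₖ ρ x)

/-- Extension `Φ ⊗ id_C` of a linear map `Φ` on the first tensor factor. -/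
def extendC {α γ : Type*} (Φ : Matrix α α ℂ →ₗ[ℂ] Matrix α α ℂ)
    (M : Matrix (α × γ) (α × γ) ℂ) : Matrix (α × γ) (α × γ) ℂ :=
  fun p q => Φ (fun a a' => M (a, p.2) (a', q.2)) p.1 q.1

/-- The copy map `m` copying the classical register `G` of a CQ state onto an ancilla `C`:
it sends `∑ₓ q(x)|x⟩⟨x|_G ⊗ σ(x)_S` to `∑ₓ q(x)|x⟩⟨x|_G ⊗ σ(x)_S ⊗ |x⟩⟨x|_C`. -/
def copyG {n : ℕ} {σ : Type*} (M : Matrix (Fin n × σ) (Fin n × σ) ℂ) :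
    Matrix ((Fin n × σ) × Fin n) ((Fin n × σ) × Fin n) ℂ :=
  fun p q => if p.2 = p.1.1 ∧ q.2 = q.1.1 then M p.1 q.1 else 0

/-- The partial trace over the original classical register `G`. -/
def trG {n : ℕ} {σ : Type*}
    (M : Matrix ((Fin n × σ) × Fin n) ((Fin n × σ) × Fin n) ℂ) :
    Matrix (σ × Fin n) (σ × Fin n) ℂ :=
  fun p q => ∑ g : Fin n, M ((g, p.1), p.2) ((g, q.1), q.2)

lemma slice_eq {n d : ℕ} (N : Matrix (Fin n × Fin d) (Fin n × Fin d) ℂ)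
    (q : Fin n → ℝ) (σ : Fin n → Matrix (Fin d) (Fin d) ℂ)
    (hN : N = ∑ x, (q x : ℂ) • (ex x ⊗ₖ σ x)) (c : Fin n) :
    (fun a a' => if c = a.1 ∧ c = a'.1 then N a a' else 0 :
      Matrix (Fin n × Fin d) (Fin n × Fin d) ℂ)
    = (q c : ℂ) • (ex c ⊗ₖ σ c) := by
  funext a a'
  simp only [hN, Matrix.sum_apply, Matrix.smul_apply, kroneckerMap_apply, ex,
    Matrix.single, Matrix.of_apply, smul_eq_mul]
  by_cases h : a.1 = a'.1
  · rw [← h]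
    by_cases h1 : c = a.1
    · subst h1
      simp [Finset.sum_ite_eq']
    · simp [h1, Ne.symm h1, Finset.sum_ite_eq']
  · have hc : ∀ x : Fin n, ¬(x = a.1 ∧ x = a'.1) := by
      rintro x ⟨rfl, h2⟩; exact h h2
    have hc' : ¬(c = a.1 ∧ c = a'.1) := hc c
    simp [hc c, hc']

/-- for an invertible channel `R` on CQ states with trace-preserving inverse
and a fixed classical state `s`, the map `E_s(ρ) = Tr_G[(R⁻¹ ⊗ id_C)(m(R(s ⊗ ρ)))]` is
non-disturbing: `Tr_C(E_s(ρ)) = ρ` for all density matrices `ρ`. -/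
theorem stmt4 (n d : ℕ)
    (R Rinv : Matrix (Fin n × Fin d) (Fin n × Fin d) ℂ →ₗ[ℂ]
      Matrix (Fin n × Fin d) (Fin n × Fin d) ℂ)
    (hTP : ∀ M, (Rinv M).trace = M.trace)
    (hInv : ∀ M, Rinv (R M) = M)
    (hCQ : ∀ M, IsCQState n d M → IsCQState n d (R M))
    (p : Fin n → ℝ) (hp0 : ∀ x, 0 ≤ p x) (hp1 : ∑ x, p x = 1) :
    ∀ ρ : Matrix (Fin d) (Fin d) ℂ, IsDensity ρ →
      ptr2 (trG (extendC Rinv (copyG (R ((∑ x, (p x : ℂ) • ex x) ⊗ₖ ρ))))) = ρ := by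
  intro ρ hρ
  set S : Matrix (Fin n) (Fin n) ℂ := ∑ x, (p x : ℂ) • ex x with hS
  have hMCQ : IsCQState n d (S ⊗ₖ ρ) := by
    refine ⟨p, fun _ => ρ, hp0, hp1, fun _ => hρ, ?_⟩
    funext a a'
    simp [hS, Matrix.sum_apply, kroneckerMap_apply, Finset.sum_mul, mul_assoc]
  obtain ⟨q, σ, hq0, hq1, hσ, hN⟩ := hCQ _ hMCQ
  funext i j
  show ∑ c : Fin n, ∑ g : Fin n,
      Rinv (fun a a' => if c = a.1 ∧ c = a'.1 then R (S ⊗ₖ ρ) a a' else 0) (g, i) (g, j)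
      = ρ i j
  have key : ∀ c : Fin n,
      (fun a a' => if c = a.1 ∧ c = a'.1 then R (S ⊗ₖ ρ) a a' else 0 :
        Matrix (Fin n × Fin d) (Fin n × Fin d) ℂ) = (q c : ℂ) • (ex c ⊗ₖ σ c) :=
    slice_eq _ q σ hN
  simp_rw [key]
  rw [Finset.sum_comm]
  have step : ∀ g : Fin n,
      ∑ c : Fin n, Rinv ((q c : ℂ) • (ex c ⊗ₖ σ c)) (g, i) (g, j)
        = (S ⊗ₖ ρ) (g, i) (g, j) := by
    intro g
    have hsum : ∑ c : Fin n, Rinv ((q c : ℂ) • (ex c ⊗ₖ σ c)) = S ⊗ₖ ρ := by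
      rw [← map_sum, ← hN, hInv]
    calc ∑ c : Fin n, Rinv ((q c : ℂ) • (ex c ⊗ₖ σ c)) (g, i) (g, j)
        = (∑ c : Fin n, Rinv ((q c : ℂ) • (ex c ⊗ₖ σ c))) (g, i) (g, j) := by
          rw [Matrix.sum_apply]
      _ = (S ⊗ₖ ρ) (g, i) (g, j) := by rw [hsum]
  simp_rw [step]
  have hSg : ∀ g : Fin n, S g g = (p g : ℂ) := by
    intro g
    simp [hS, Matrix.sum_apply, ex, Matrix.single, Finset.sum_ite_eq']
  simp only [kroneckerMap_apply, hSg, ← Finset.sum_mul]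
  have h1 : ∑ g : Fin n, (p g : ℂ) = 1 := by
    rw [← Complex.ofReal_sum, hp1, Complex.ofReal_one]
  rw [h1, one_mul]

end
end

section
/- No-go theorem for reversible classical-quantum coupling (quantum case): Let d ≥ 2 and let R be a bijective map on classical-quantum states of ℂⁿ ⊗ ℂᵈ such that both R and R⁻¹ extend to trace-preserving positive linear maps sending CQ states to CQ states. Then R is non-signalling from the quantum to the classical system: for every classical state s and density matrices ρ, ρ′ on ℂᵈ, the classical marginals of R(s ⊗ ρ) and R(s ⊗ ρ′) coincide. -/
open Matrix Kronecker BigOperators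
open scoped ComplexOrder

noncomputable section

namespace CQAux
variable {m : Type*} [Fintype m] [DecidableEq m]

/-- rank one matrix `v v*` -/
def rk (v : m → ℂ) : Matrix m m ℂ := vecMulVec v (star v)

lemma rk_apply (v : m → ℂ) (i j : m) : rk v i j = v i * (starRingEnd ℂ) (v j) := rfl

lemma rk_zero : rk (0 : m → ℂ) = 0 := by
  ext i j; simp [rk_apply]

lemma rk_mulVec (v y : m → ℂ) : (rk v) *ᵥ y = (star v ⬝ᵥ y) • v := by
  ext i
  simp [rk, vecMulVec, mulVec, dotProduct, Finset.mul_sum, mul_comm, mul_left_comm]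

lemma rk_psd (v : m → ℂ) : (rk v).PosSemidef := by
  refine Matrix.PosSemidef.of_dotProduct_mulVec_nonneg ?_ ?_
  · ext i j
    simp [rk, conjTranspose_apply, vecMulVec_apply, mul_comm]
  · intro x
    rw [rk_mulVec, dotProduct_smul]
    have h : star x ⬝ᵥ v = (starRingEnd ℂ) (star v ⬝ᵥ x) := by
      simp [dotProduct, map_sum, mul_comm]
    rw [smul_eq_mul, h, Complex.mul_conj]
    exact Complex.zero_le_real.mpr (Complex.normSq_nonneg _)


lemma star_dot_conj (v w : m → ℂ) : star v ⬝ᵥ w = (starRingEnd ℂ) (star w ⬝ᵥ v) := by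
  simp [dotProduct, map_sum, mul_comm]

lemma dot_CtC (C : Matrix m m ℂ) (x y : m → ℂ) :
    star x ⬝ᵥ (Cᴴ * C) *ᵥ y = star (C *ᵥ x) ⬝ᵥ (C *ᵥ y) := by
  rw [dotProduct_mulVec, ← vecMul_vecMul, ← star_mulVec, ← dotProduct_mulVec]

lemma psd_CtC {B : Matrix m m ℂ} (hB : B.PosSemidef) : ∃ C : Matrix m m ℂ, B = Cᴴ * C := by
  open scoped MatrixOrder in
  obtain ⟨X, hX, -, hXX⟩ :=
    CFC.exists_sqrt_of_isSelfAdjoint_of_quasispectrumRestricts hB.isHermitian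
      (QuasispectrumRestricts.nnreal_of_nonneg hB.nonneg)
  exact ⟨X, by rw [← hXX]; exact congrArg (· * X) hX.star_eq.symm⟩

lemma squeeze {v : m → ℂ} {B : Matrix m m ℂ} (hB : B.PosSemidef)
    (hB2 : (rk v - B).PosSemidef) : ∃ c : ℂ, B = c • rk v := by
  obtain ⟨C, hC⟩ := psd_CtC hB
  have step1 : ∀ w : m → ℂ, star v ⬝ᵥ w = 0 → C *ᵥ w = 0 := by
    intro w hw
    have h1 : 0 ≤ star w ⬝ᵥ B *ᵥ w := hB.dotProduct_mulVec_nonneg w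
    have h2 : 0 ≤ star w ⬝ᵥ (rk v - B) *ᵥ w := hB2.dotProduct_mulVec_nonneg w
    have h3 : star w ⬝ᵥ (rk v) *ᵥ w = 0 := by
      rw [rk_mulVec, hw]; simp
    rw [sub_mulVec, dotProduct_sub, h3, zero_sub] at h2
    have hq : star w ⬝ᵥ B *ᵥ w = 0 := le_antisymm (neg_nonneg.mp h2) h1
    rw [hC, dot_CtC] at hq
    exact dotProduct_star_self_eq_zero.mp hq
  have stepB : ∀ w : m → ℂ, star v ⬝ᵥ w = 0 → B *ᵥ w = 0 := by
    intro w hw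
    rw [hC, ← mulVec_mulVec, step1 w hw, mulVec_zero]
  by_cases hv : v = 0
  · refine ⟨0, ?_⟩
    have hB0 : ∀ w, B *ᵥ w = 0 := fun w => stepB w (by simp [hv])
    ext i j
    have := congrFun (hB0 (Pi.single j 1)) i
    rw [mulVec_single] at this
    simpa using this
  · set t : ℂ := star v ⬝ᵥ v with ht
    have htne : t ≠ 0 := fun h => hv (dotProduct_star_self_eq_zero.mp h)
    set c' : ℂ := (star v ⬝ᵥ B *ᵥ v) / t with hc'
    have hBv : B *ᵥ v = c' • v := by
      set z : m → ℂ := B *ᵥ v - c' • v with hz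
      have hvz : star v ⬝ᵥ z = 0 := by
        simp only [hz, dotProduct_sub, dotProduct_smul, smul_eq_mul, ← ht]
        rw [hc', div_mul_cancel₀ _ htne, sub_self]
      have hCz : C *ᵥ z = 0 := step1 z hvz
      have h1 : star z ⬝ᵥ B *ᵥ v = 0 := by
        rw [hC, dot_CtC, hCz]
        simp
      have h2 : star z ⬝ᵥ v = 0 := by
        rw [star_dot_conj, hvz, map_zero]
      have hzz : star z ⬝ᵥ z = 0 := by
        conv_lhs => rw [hz]
        rw [dotProduct_sub, dotProduct_smul, h1, h2, smul_eq_mul, mul_zero, sub_zero]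
      have hz0 : z = 0 := dotProduct_star_self_eq_zero.mp hzz
      exact sub_eq_zero.mp (hz ▸ hz0)
    refine ⟨c' / t, ?_⟩
    have hmv : ∀ w, B *ᵥ w = ((c' / t) • rk v) *ᵥ w := by
      intro w
      set a : ℂ := (star v ⬝ᵥ w) / t with ha
      have hw' : star v ⬝ᵥ (w - a • v) = 0 := by
        simp only [dotProduct_sub, dotProduct_smul, smul_eq_mul, ← ht, ha]
        rw [div_mul_cancel₀ _ htne, sub_self]
      have h1 : B *ᵥ (w - a • v) = 0 := stepB _ hw'
      rw [mulVec_sub, mulVec_smul, sub_eq_zero] at h1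
      rw [h1, hBv, smul_smul, smul_mulVec, rk_mulVec, smul_smul]
      congr 1
      rw [ha]
      field_simp
    ext i j
    have := congrFun (hmv (Pi.single j 1)) i
    rw [mulVec_single, mulVec_single] at this
    simpa using this


lemma ortho_eq {u w : m → ℂ} (hu : u ≠ 0) (hw : w ≠ 0) (huw : star u ⬝ᵥ w = 0)
    {a b cc dd : ℂ}
    (h : cc • rk (u + w) + dd • rk (u - w) = (2*a) • rk u + (2*b) • rk w) :
    a = b ∧ cc = a := by
  have hwu : star w ⬝ᵥ u = 0 := by rw [star_dot_conj, huw, map_zero]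
  have htu : star u ⬝ᵥ u ≠ 0 := fun hh => hu (dotProduct_star_self_eq_zero.mp hh)
  have htw : star w ⬝ᵥ w ≠ 0 := fun hh => hw (dotProduct_star_self_eq_zero.mp hh)
  have ev : ∀ x y : m → ℂ,
      cc * ((star u ⬝ᵥ y + star w ⬝ᵥ y) * (star x ⬝ᵥ u + star x ⬝ᵥ w))
        + dd * ((star u ⬝ᵥ y - star w ⬝ᵥ y) * (star x ⬝ᵥ u - star x ⬝ᵥ w))
      = 2*a * ((star u ⬝ᵥ y) * (star x ⬝ᵥ u))
        + 2*b * ((star w ⬝ᵥ y) * (star x ⬝ᵥ w)) := by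
    intro x y
    have h' := congrArg (fun M : Matrix m m ℂ => star x ⬝ᵥ M *ᵥ y) h
    simp only [add_mulVec, smul_mulVec, rk_mulVec, star_add, star_sub,
      add_dotProduct, sub_dotProduct, dotProduct_add, dotProduct_sub, dotProduct_smul,
      smul_eq_mul] at h'
    linear_combination h'
  have e1 := ev u u
  have e2 := ev w w
  have e3 := ev u w
  simp only [star_add, star_sub, add_dotProduct, sub_dotProduct, dotProduct_add,
    dotProduct_sub, huw, hwu, add_zero, zero_add, sub_zero, zero_sub, mul_zero, zero_mul,
    mul_neg, neg_mul, neg_neg] at e1 e2 e3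
  have E1 : cc + dd = 2*a := by
    apply mul_right_cancel₀ (mul_ne_zero htu htu)
    linear_combination e1
  have E2 : cc + dd = 2*b := by
    apply mul_right_cancel₀ (mul_ne_zero htw htw)
    linear_combination e2
  have E3 : cc = dd := by
    apply mul_right_cancel₀ (mul_ne_zero htw htu)
    linear_combination e3
  exact ⟨by linear_combination (E2 - E1)/2, by linear_combination (E1 + E3)/2⟩


lemma rk_add_sub (u w : m → ℂ) :
    rk (u + w) + rk (u - w) = (2:ℂ) • rk u + (2:ℂ) • rk w := by
  ext i j
  simp only [rk_apply, Matrix.add_apply, Matrix.smul_apply, Pi.add_apply, Pi.sub_apply,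
    map_add, map_sub, smul_eq_mul]
  ring

lemma rk_smul (α : ℂ) (v : m → ℂ) :
    rk (α • v) = (α * (starRingEnd ℂ) α) • rk v := by
  ext i j
  simp only [rk_apply, Matrix.smul_apply, Pi.smul_apply, smul_eq_mul, _root_.map_mul]
  ring

lemma rk_ne_zero {v : m → ℂ} (hv : v ≠ 0) : rk v ≠ 0 := by
  obtain ⟨i, hi⟩ := Function.ne_iff.mp hv
  intro h
  apply hi
  have h2 := congrFun (congrFun h i) i
  simp only [rk_apply, Matrix.zero_apply, Complex.mul_conj] at h2
  have : Complex.normSq (v i) = 0 := by exact_mod_cast h2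
  simpa using Complex.normSq_eq_zero.mp this

lemma polar (x y : m → ℂ) :
    vecMulVec x (star y) = (4⁻¹ : ℂ) •
      (rk (x + y) - rk (x - y)
        + Complex.I • rk (x + Complex.I • y) - Complex.I • rk (x - Complex.I • y)) := by
  ext i j
  have hI : Complex.I * Complex.I = -1 := Complex.I_mul_I
  simp only [rk_apply, vecMulVec_apply, Matrix.smul_apply, Matrix.add_apply, Matrix.sub_apply,
    Pi.add_apply, Pi.sub_apply, Pi.smul_apply, Pi.star_apply, smul_eq_mul, map_add, map_sub,
    _root_.map_mul, Complex.conj_I, RCLike.star_def]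
  linear_combination (4⁻¹ * (2 * x i * (starRingEnd ℂ) (y j)
    - 2 * y i * (starRingEnd ℂ) (x j))) * hI


lemma smul_cancel {A : Matrix m m ℂ} (hA : A ≠ 0) {c c' : ℂ} (h : c • A = c' • A) :
    c = c' := by
  have h2 : (c - c') • A = 0 := by rw [sub_smul, h, sub_self]
  rcases smul_eq_zero.mp h2 with h3 | h3
  · exact sub_eq_zero.mp h3
  · exact absurd h3 hA

lemma nondisturbing_trivial [Nonempty m]
    (ψ : Matrix m m ℂ →ₗ[ℂ] Matrix m m ℂ)
    (h1 : ∀ v : m → ℂ, (ψ (rk v)).PosSemidef)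
    (h2 : ∀ v : m → ℂ, (rk v - ψ (rk v)).PosSemidef) :
    ∃ c : ℂ, ∀ M, ψ M = c • M := by
  choose lam hlam using fun v => squeeze (h1 v) (h2 v)
  have key : ∀ u w : m → ℂ, u ≠ 0 → w ≠ 0 → star u ⬝ᵥ w = 0 →
      lam u = lam w ∧ lam (u + w) = lam u := by
    intro u w hu hw huw
    have hmat : lam (u+w) • rk (u+w) + lam (u-w) • rk (u-w)
        = (2 * lam u) • rk u + (2 * lam w) • rk w := by
      calc lam (u+w) • rk (u+w) + lam (u-w) • rk (u-w)
          = ψ (rk (u+w)) + ψ (rk (u-w)) := by rw [hlam, hlam]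
        _ = ψ ((2:ℂ) • rk u + (2:ℂ) • rk w) := by rw [← map_add, rk_add_sub]
        _ = (2 * lam u) • rk u + (2 * lam w) • rk w := by
            rw [map_add, _root_.map_smul, _root_.map_smul, hlam, hlam, smul_smul, smul_smul]
    exact ortho_eq hu hw huw hmat
  have hscale : ∀ (α : ℂ) (v : m → ℂ), α ≠ 0 → v ≠ 0 → lam (α • v) = lam v := by
    intro α v hα hv
    have hs : α * (starRingEnd ℂ) α ≠ 0 :=
      mul_ne_zero hα (fun h => hα (by simpa using congrArg (starRingEnd ℂ) h))
    have e1 : (lam (α • v) * (α * (starRingEnd ℂ) α)) • rk v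
        = (α * (starRingEnd ℂ) α * lam v) • rk v := by
      have := hlam (α • v)
      rw [rk_smul, _root_.map_smul, hlam, smul_smul, smul_smul] at this
      rw [← this, mul_comm]
    have h5 := smul_cancel (rk_ne_zero hv) e1
    rw [mul_comm] at h5
    exact mul_left_cancel₀ hs h5
  obtain ⟨i0⟩ := (inferInstance : Nonempty m)
  set e0 : m → ℂ := Pi.single i0 1 with he0def
  have he0 : e0 ≠ 0 := by
    intro h
    have := congrFun h i0
    simp [he0def] at this
  have hconst : ∀ v, v ≠ 0 → lam v = lam e0 := by
    intro v hv
    by_cases h0 : v i0 = 0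
    · have horth : star e0 ⬝ᵥ v = 0 := by
        simp [he0def, dotProduct, Pi.single_apply, h0]
      exact ((key e0 v he0 hv horth).1).symm
    · set w : m → ℂ := v - (v i0) • e0 with hwdef
      have hw0 : w i0 = 0 := by simp [hwdef, he0def]
      by_cases hw : w = 0
      · have hv' : v = (v i0) • e0 := by
          have := sub_eq_zero.mp hw
          exact this
        rw [hv']
        exact hscale _ _ h0 he0
      · have horth : star ((v i0) • e0) ⬝ᵥ w = 0 := by
          have : ∀ j, (starRingEnd ℂ) ((v i0 • e0) j) * w j = 0 := by
            intro j
            by_cases hj : j = i0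
            · subst hj; rw [hw0, mul_zero]
            · simp [he0def, Pi.single_apply, hj]
          simp only [dotProduct, Pi.star_apply, RCLike.star_def]
          exact Finset.sum_eq_zero fun j _ => this j
        have hu' : (v i0) • e0 ≠ 0 := smul_ne_zero h0 he0
        have k := key _ w hu' hw horth
        have hsum : (v i0) • e0 + w = v := by
          rw [hwdef]; abel
        calc lam v = lam ((v i0) • e0 + w) := by rw [hsum]
          _ = lam ((v i0) • e0) := k.2
          _ = lam e0 := hscale _ _ h0 he0
  set c := lam e0 with hcdef
  have hrk : ∀ v, ψ (rk v) = c • rk v := by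
    intro v
    by_cases hv : v = 0
    · simp [hv, rk_zero]
    · rw [hlam, hconst v hv]
  refine ⟨c, fun M => ?_⟩
  have hstd : ∀ i j : m, ψ (single i j 1) = c • single i j 1 := by
    intro i j
    have hsb : single i j (1:ℂ) = vecMulVec (Pi.single i 1) (star (Pi.single j 1)) := by
      have hstar : star (Pi.single j (1:ℂ) : m → ℂ) = Pi.single j 1 := by
        funext k
        rw [Pi.star_apply, Pi.single_apply]
        split_ifs <;> simp
      rw [hstar]
      exact single_eq_single_vecMulVec_single i j
    rw [hsb, polar, _root_.map_smul, map_sub, map_add, map_sub, _root_.map_smul, _root_.map_smul,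
      hrk, hrk, hrk, hrk]
    module
  conv_lhs => rw [matrix_eq_sum_single M]
  conv_rhs => rw [matrix_eq_sum_single M]
  rw [map_sum, Finset.smul_sum]
  refine Finset.sum_congr rfl fun i _ => ?_
  rw [map_sum, Finset.smul_sum]
  refine Finset.sum_congr rfl fun j _ => ?_
  have h9 : single i j (M i j) = (M i j) • single i j 1 := by
    rw [smul_single, smul_eq_mul, mul_one]
  rw [h9, _root_.map_smul, hstd, smul_comm]

end CQAux

section Part2
open CQAux

variable {n d : ℕ}

lemma ptr1_add {α β : Type*} [Fintype α] [Fintype β] (M N : Matrix (α × β) (α × β) ℂ) :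
    ptr1 (M + N) = ptr1 M + ptr1 N := by
  ext i j; simp [ptr1, Finset.sum_add_distrib]

lemma ptr1_smul {α β : Type*} [Fintype α] [Fintype β] (c : ℂ) (M : Matrix (α × β) (α × β) ℂ) :
    ptr1 (c • M) = c • ptr1 M := by
  ext i j; simp [ptr1, Finset.mul_sum]

lemma ptr1_sum {α β ι : Type*} [Fintype α] [Fintype β] (t : Finset ι)
    (f : ι → Matrix (α × β) (α × β) ℂ) :
    ptr1 (∑ x ∈ t, f x) = ∑ x ∈ t, ptr1 (f x) := by
  ext i j
  simp only [ptr1, Matrix.sum_apply]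
  rw [Finset.sum_comm]

lemma ptr1_trace {α β : Type*} [Fintype α] [Fintype β] (M : Matrix (α × β) (α × β) ℂ) :
    (ptr1 M).trace = M.trace := by
  simp only [Matrix.trace, Matrix.diag, ptr1]
  rw [Finset.sum_comm, Fintype.sum_prod_type]

lemma ptr1_psd {α β : Type*} [Fintype α] [DecidableEq α] [Fintype β]
    {M : Matrix (α × β) (α × β) ℂ}
    (hM : M.PosSemidef) : (ptr1 M).PosSemidef := by
  refine Matrix.PosSemidef.of_dotProduct_mulVec_nonneg (Matrix.ext fun i j => ?_) fun v => ?_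
  · have hh := hM.1
    simp only [ptr1, Matrix.conjTranspose_apply, star_sum]
    refine Finset.sum_congr rfl fun k _ => ?_
    conv_rhs => rw [← hh]
    simp [Matrix.conjTranspose_apply]
  · set w : α → (α × β) → ℂ := fun k a => if a.1 = k then v a.2 else 0 with hwdef
    have expand : ∀ k, star (w k) ⬝ᵥ M *ᵥ (w k)
        = ∑ i, ∑ j, star (v i) * (M (k,i) (k,j) * v j) := by
      intro k
      simp only [dotProduct, Matrix.mulVec, hwdef, Pi.star_apply, Fintype.sum_prod_type,
        apply_ite (star : ℂ → ℂ), star_zero, ite_mul, mul_ite, zero_mul, mul_zero,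
        Finset.sum_ite_irrel, Finset.sum_const_zero,
        Finset.sum_ite_eq', Finset.mem_univ, if_true, Finset.mul_sum]
    have lhs : star v ⬝ᵥ (ptr1 M) *ᵥ v
        = ∑ k, ∑ i, ∑ j, star (v i) * (M (k,i) (k,j) * v j) := by
      simp only [dotProduct, Matrix.mulVec, ptr1, Pi.star_apply, Finset.sum_mul,
        Finset.mul_sum]
      exact (Finset.sum_congr rfl fun i _ => Finset.sum_comm).trans Finset.sum_comm
    rw [lhs]
    refine Finset.sum_nonneg fun k _ => ?_
    rw [← expand k]
    exact hM.dotProduct_mulVec_nonneg _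

lemma psd_sum {α ι : Type*} [Fintype α] [DecidableEq α] (t : Finset ι)
    (f : ι → Matrix α α ℂ) (hf : ∀ x ∈ t, (f x).PosSemidef) :
    (∑ x ∈ t, f x).PosSemidef := by
  classical
  induction t using Finset.induction_on with
  | empty => simpa using Matrix.PosSemidef.zero
  | insert _ _ hx ih =>
      rw [Finset.sum_insert hx]
      exact ((hf _ (Finset.mem_insert_self _ _)).add
        (ih fun x hxt => hf x (Finset.mem_insert_of_mem hxt)))

lemma psd_smul_real {α : Type*} [Fintype α] {M : Matrix α α ℂ} (hM : M.PosSemidef)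
    {r : ℝ} (hr : 0 ≤ r) : ((r : ℂ) • M).PosSemidef := by
  refine Matrix.PosSemidef.of_dotProduct_mulVec_nonneg (Matrix.ext fun i j => ?_) fun v => ?_
  · simp only [Matrix.conjTranspose_apply, Matrix.smul_apply, smul_eq_mul, star_mul',
      Complex.star_def, Complex.conj_ofReal]
    conv_rhs => rw [← hM.1]
    simp only [Matrix.conjTranspose_apply, Complex.star_def]
  · rw [Matrix.smul_mulVec, dotProduct_smul, smul_eq_mul]
    exact mul_nonneg (Complex.zero_le_real.mpr hr) (hM.dotProduct_mulVec_nonneg v)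

end Part2

section Part3
open CQAux

variable {n d : ℕ}

lemma kron_conjTranspose (A : Matrix (Fin n) (Fin n) ℂ) (B : Matrix (Fin d) (Fin d) ℂ) :
    (A ⊗ₖ B)ᴴ = Aᴴ ⊗ₖ Bᴴ := by
  ext a b
  simp [Matrix.conjTranspose_apply, Matrix.kroneckerMap_apply, star_mul', mul_comm]

lemma kron_psd {A : Matrix (Fin n) (Fin n) ℂ} {B : Matrix (Fin d) (Fin d) ℂ}
    (hA : A.PosSemidef) (hB : B.PosSemidef) : (A ⊗ₖ B).PosSemidef := by
  obtain ⟨X, hX⟩ := CQAux.psd_CtC hA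
  obtain ⟨Y, hY⟩ := CQAux.psd_CtC hB
  rw [hX, hY, Matrix.mul_kronecker_mul, ← kron_conjTranspose]
  exact Matrix.posSemidef_conjTranspose_mul_self _

lemma blockdiag_of_cq {M : Matrix (Fin n × Fin d) (Fin n × Fin d) ℂ}
    (hM : IsCQState n d M) : ∀ a b : Fin n × Fin d, a.1 ≠ b.1 → M a b = 0 := by
  obtain ⟨q, σ, hq0, hq1, hσ, rfl⟩ := hM
  intro a b hab
  simp only [Matrix.sum_apply, Matrix.smul_apply, Matrix.kroneckerMap_apply, ex,
    Matrix.single, Matrix.of_apply, smul_eq_mul]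
  refine Finset.sum_eq_zero fun x _ => ?_
  have hx : ¬(x = a.1 ∧ x = b.1) := fun ⟨h1, h2⟩ => hab (by rw [← h1, ← h2])
  simp [hx]

lemma ptr2_offdiag {M : Matrix (Fin n × Fin d) (Fin n × Fin d) ℂ}
    (hM : IsCQState n d M) {i j : Fin n} (hij : i ≠ j) : ptr2 M i j = 0 := by
  simp only [ptr2]
  exact Finset.sum_eq_zero fun k _ => blockdiag_of_cq hM (i,k) (j,k) hij

/-- the projector onto the x-th classical block, as a diagonal matrix -/
def Pd (n d : ℕ) (x : Fin n) : Matrix (Fin n × Fin d) (Fin n × Fin d) ℂ :=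
  Matrix.diagonal (fun a => if a.1 = x then 1 else 0)

lemma Pd_herm (x : Fin n) : (Pd n d x)ᴴ = Pd n d x := by
  rw [Pd, Matrix.diagonal_conjTranspose]
  have hst : (star fun a : Fin n × Fin d => if a.1 = x then (1:ℂ) else 0)
      = fun a : Fin n × Fin d => if a.1 = x then (1:ℂ) else 0 := by
    funext a
    rw [Pi.star_apply, apply_ite (star : ℂ → ℂ), star_one, star_zero]
  rw [hst]

lemma Pd_conj_apply (x : Fin n) (M : Matrix (Fin n × Fin d) (Fin n × Fin d) ℂ)
    (a b : Fin n × Fin d) : (Pd n d x * M * Pd n d x) a b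
    = (if a.1 = x then 1 else 0) * M a b * (if b.1 = x then 1 else 0) := by
  rw [Pd, Matrix.mul_diagonal, Matrix.diagonal_mul]

lemma Pd_pinch {M : Matrix (Fin n × Fin d) (Fin n × Fin d) ℂ}
    (hM : ∀ a b : Fin n × Fin d, a.1 ≠ b.1 → M a b = 0) :
    ∑ x, Pd n d x * M * Pd n d x = M := by
  ext a b
  rw [Matrix.sum_apply]
  simp only [Pd_conj_apply]
  rcases eq_or_ne a.1 b.1 with h|h
  · have hterm : ∀ x : Fin n,
        (if a.1 = x then (1:ℂ) else 0) * M a b * (if b.1 = x then 1 else 0)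
          = if x = a.1 then M a b else 0 := by
      intro x
      rcases eq_or_ne x a.1 with hx|hx
      · subst hx; simp [← h]
      · simp [Ne.symm hx, hx]
    simp only [hterm, Finset.sum_ite_eq', Finset.mem_univ, if_true]
  · rw [hM a b h]
    simp

lemma Pd_trace (x : Fin n) (M : Matrix (Fin n × Fin d) (Fin n × Fin d) ℂ) :
    (Pd n d x * M * Pd n d x).trace = ptr2 M x x := by
  simp only [Matrix.trace, Matrix.diag, Pd_conj_apply, ptr2]
  rw [Fintype.sum_prod_type]
  refine (Finset.sum_eq_single x (fun i _ hix => ?_) (fun h => absurd (Finset.mem_univ x) h)).trans ?_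
  · simp [hix]
  · simp

lemma sum_ex_diag (q : Fin n → ℂ) : (∑ x, q x • ex x) = Matrix.diagonal q := by
  ext i j
  simp only [Matrix.sum_apply, Matrix.smul_apply, ex, Matrix.single,
    Matrix.of_apply, smul_eq_mul]
  rcases eq_or_ne i j with rfl|h
  · simp [Finset.sum_ite_eq', and_self]
  · rw [Matrix.diagonal_apply_ne _ h]
    refine Finset.sum_eq_zero fun x _ => ?_
    have hx : ¬(x = i ∧ x = j) := fun ⟨h1, h2⟩ => h (by rw [← h1, ← h2])
    simp [hx]

lemma kron_sum_smul (q : Fin n → ℂ) (A : Matrix (Fin d) (Fin d) ℂ) :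
    (∑ x, q x • ex x) ⊗ₖ A = ∑ x, q x • (ex x ⊗ₖ A) := by
  ext a b
  simp [Matrix.sum_apply, Matrix.kroneckerMap_apply, Finset.sum_mul, Matrix.smul_apply,
    smul_eq_mul, mul_assoc]

lemma ptr1_kron (A : Matrix (Fin n) (Fin n) ℂ) (B : Matrix (Fin d) (Fin d) ℂ) :
    ptr1 (A ⊗ₖ B) = A.trace • B := by
  ext i j
  simp [ptr1, Matrix.kroneckerMap_apply, Matrix.trace, Matrix.diag, Finset.sum_mul,
    Matrix.smul_apply, smul_eq_mul]

lemma rk_trace (v : Fin d → ℂ) : (rk v).trace = star v ⬝ᵥ v := by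
  simp [Matrix.trace, Matrix.diag, rk_apply, dotProduct, mul_comm]

lemma dot_self_real (v : Fin d → ℂ) :
    star v ⬝ᵥ v = ((∑ i, Complex.normSq (v i) : ℝ) : ℂ) := by
  push_cast
  simp only [dotProduct, Pi.star_apply, Complex.star_def]
  exact Finset.sum_congr rfl fun i _ => (Complex.normSq_eq_conj_mul_self).symm

end Part3

/-- no-go theorem for reversible classical-quantum coupling, quantum case:
let `d ≥ 2` and let `R` be a bijective map on classical-quantum states of `ℂⁿ ⊗ ℂᵈ` such
that both `R` and `R⁻¹` extend to trace-preserving positive linear maps sending CQ states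
to CQ states. Then `R` is non-signalling from the quantum to the classical system: for
every classical state `s` and density matrices `ρ, ρ'`, the classical marginals of
`R(s ⊗ ρ)` and `R(s ⊗ ρ')` coincide. -/
theorem stmt6 (n d : ℕ) (hd : 2 ≤ d)
    (R Rinv : Matrix (Fin n × Fin d) (Fin n × Fin d) ℂ →ₗ[ℂ]
      Matrix (Fin n × Fin d) (Fin n × Fin d) ℂ)
    (hTP_R : ∀ M, (R M).trace = M.trace)
    (hTP_Rinv : ∀ M, (Rinv M).trace = M.trace)
    (hPos_R : ∀ M, M.PosSemidef → (R M).PosSemidef)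
    (hPos_Rinv : ∀ M, M.PosSemidef → (Rinv M).PosSemidef)
    (hCQ_R : ∀ M, IsCQState n d M → IsCQState n d (R M))
    (hCQ_Rinv : ∀ M, IsCQState n d M → IsCQState n d (Rinv M))
    (hInv : ∀ M, IsCQState n d M → Rinv (R M) = M)
    (hInv' : ∀ M, IsCQState n d M → R (Rinv M) = M)
    (p : Fin n → ℝ) (hp0 : ∀ x, 0 ≤ p x) (hp1 : ∑ x, p x = 1)
    (ρ ρ' : Matrix (Fin d) (Fin d) ℂ) (hρ : IsDensity ρ) (hρ' : IsDensity ρ') :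
    ptr2 (R ((∑ x, (p x : ℂ) • ex x) ⊗ₖ ρ)) =
      ptr2 (R ((∑ x, (p x : ℂ) • ex x) ⊗ₖ ρ')) := by
  classical
  have hd0 : 0 < d := by omega
  haveI : Nonempty (Fin d) := ⟨⟨0, hd0⟩⟩
  set s : Matrix (Fin n) (Fin n) ℂ := ∑ x, (p x : ℂ) • ex x with hsdef
  have hs_diag : s = Matrix.diagonal (fun x => (p x : ℂ)) := sum_ex_diag _
  have hs_psd : s.PosSemidef := by
    rw [hs_diag]
    exact Matrix.posSemidef_diagonal_iff.mpr fun i => Complex.zero_le_real.mpr (hp0 i)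
  have hs_trace : s.trace = 1 := by
    rw [hs_diag, Matrix.trace_diagonal, ← Complex.ofReal_sum, hp1, Complex.ofReal_one]
  have hscq : ∀ A : Matrix (Fin d) (Fin d) ℂ, IsDensity A → IsCQState n d (s ⊗ₖ A) :=
    fun A hA => ⟨p, fun _ => A, hp0, hp1, fun _ => hA, by rw [hsdef, kron_sum_smul]⟩
  let ψ : Fin n → (Matrix (Fin d) (Fin d) ℂ →ₗ[ℂ] Matrix (Fin d) (Fin d) ℂ) := fun x =>
    { toFun := fun A => ptr1 (Rinv (Pd n d x * R (s ⊗ₖ A) * Pd n d x))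
      map_add' := by
        intro A B
        rw [Matrix.kronecker_add, map_add, mul_add, add_mul, map_add, ptr1_add]
      map_smul' := by
        intro cc A
        rw [Matrix.kronecker_smul, _root_.map_smul, Matrix.mul_smul, Matrix.smul_mul,
          _root_.map_smul, ptr1_smul]
        rfl }
  have hψ : ∀ x A, ψ x A = ptr1 (Rinv (Pd n d x * R (s ⊗ₖ A) * Pd n d x)) := fun _ _ => rfl
  have hND : ∀ A, IsDensity A → ∑ y, ψ y A = A := by
    intro A hA
    have hMcq : IsCQState n d (R (s ⊗ₖ A)) := hCQ_R _ (hscq A hA)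
    have hsum : ∑ y, ψ y A = ptr1 (Rinv (∑ y, Pd n d y * R (s ⊗ₖ A) * Pd n d y)) := by
      rw [map_sum, ptr1_sum]
      exact Finset.sum_congr rfl fun y _ => hψ y A
    rw [hsum, Pd_pinch (blockdiag_of_cq hMcq), hInv _ (hscq A hA), ptr1_kron, hs_trace,
      one_smul]
  have hψpsd : ∀ (x : Fin n) (B : Matrix (Fin d) (Fin d) ℂ), B.PosSemidef →
      (ψ x B).PosSemidef := by
    intro x B hB
    rw [hψ]
    refine ptr1_psd (hPos_Rinv _ ?_)
    have h1 : (R (s ⊗ₖ B)).PosSemidef := hPos_R _ (kron_psd hs_psd hB)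
    have h2 := h1.mul_mul_conjTranspose_same (Pd n d x)
    rwa [Pd_herm] at h2
  have hNDrk : ∀ v : Fin d → ℂ, ∑ y, ψ y (CQAux.rk v) = CQAux.rk v := by
    intro v
    by_cases hv : v = 0
    · subst hv; rw [CQAux.rk_zero]; simp
    · set t : ℝ := ∑ i, Complex.normSq (v i) with htdef
      have ht0 : 0 < t := by
        obtain ⟨i, hi⟩ := Function.ne_iff.mp hv
        refine Finset.sum_pos' (fun j _ => Complex.normSq_nonneg _)
          ⟨i, Finset.mem_univ i, ?_⟩
        exact (Complex.normSq_pos).mpr hi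
      have hrk_t : (CQAux.rk v).trace = (t:ℂ) := by rw [rk_trace, dot_self_real]
      set A : Matrix (Fin d) (Fin d) ℂ := ((t⁻¹ : ℝ) : ℂ) • CQAux.rk v with hAdef
      have hA : IsDensity A := by
        constructor
        · exact psd_smul_real (CQAux.rk_psd v) (inv_nonneg.mpr ht0.le)
        · rw [hAdef, Matrix.trace_smul, hrk_t, smul_eq_mul]
          rw [← Complex.ofReal_mul, inv_mul_cancel₀ ht0.ne', Complex.ofReal_one]
      have hvA : CQAux.rk v = (t : ℂ) • A := by
        rw [hAdef, smul_smul, ← Complex.ofReal_mul, mul_inv_cancel₀ ht0.ne',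
          Complex.ofReal_one, one_smul]
      calc ∑ y, ψ y (CQAux.rk v) = ∑ y, (t:ℂ) • ψ y A := by
            refine Finset.sum_congr rfl fun y _ => ?_
            rw [hvA, _root_.map_smul]
        _ = (t:ℂ) • ∑ y, ψ y A := by rw [Finset.smul_sum]
        _ = (t:ℂ) • A := by rw [hND A hA]
        _ = CQAux.rk v := hvA.symm
  have h1 : ∀ (x : Fin n) (v : Fin d → ℂ), (ψ x (CQAux.rk v)).PosSemidef :=
    fun x v => hψpsd x _ (CQAux.rk_psd v)
  have h2 : ∀ (x : Fin n) (v : Fin d → ℂ),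
      (CQAux.rk v - ψ x (CQAux.rk v)).PosSemidef := by
    intro x v
    have hsplit : CQAux.rk v - ψ x (CQAux.rk v)
        = ∑ y ∈ Finset.univ.erase x, ψ y (CQAux.rk v) := by
      have hh := hNDrk v
      rw [← Finset.add_sum_erase _ _ (Finset.mem_univ x)] at hh
      exact (eq_sub_of_add_eq' hh).symm
    rw [hsplit]
    exact psd_sum _ _ fun y _ => h1 y v
  choose c hc using fun x => CQAux.nondisturbing_trivial (ψ x) (h1 x) (h2 x)
  have key : ∀ (σ : Matrix (Fin d) (Fin d) ℂ), IsDensity σ →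
      ptr2 (R (s ⊗ₖ σ)) = Matrix.diagonal c := by
    intro σ hσ
    have hMcq : IsCQState n d (R (s ⊗ₖ σ)) := hCQ_R _ (hscq σ hσ)
    ext i j
    rcases eq_or_ne i j with rfl|hij
    · rw [Matrix.diagonal_apply_eq]
      have e1 : ptr2 (R (s ⊗ₖ σ)) i i = (Pd n d i * R (s ⊗ₖ σ) * Pd n d i).trace :=
        (Pd_trace i _).symm
      rw [e1, ← hTP_Rinv, ← ptr1_trace, ← hψ, hc i σ, Matrix.trace_smul, hσ.2, smul_eq_mul,
        mul_one]
    · rw [Matrix.diagonal_apply_ne _ hij]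
      exact ptr2_offdiag hMcq hij
  rw [key ρ hρ, key ρ' hρ']


end
end

section
/- No perfect non-disturbing discrimination of non-orthogonal pure states: if E : M_d(ℂ) → M_d(ℂ) ⊗ D_m is a channel with Tr_C ∘ E = id, and |ψ⟩, |φ⟩ are pure states with 0 < |⟨ψ|φ⟩| < 1, then the pointer marginals Tr_S(E(|ψ⟩⟨ψ|)) and Tr_S(E(|φ⟩⟨φ|)) are equal. -/
open Matrix Kronecker BigOperators
open scoped ComplexOrder

noncomputable section

/-! ### Auxiliary lemmas -/

lemma star_dot_swap {n : Type*} [Fintype n] (a b : n → ℂ) :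
    star a ⬝ᵥ b = star (star b ⬝ᵥ a) := by
  simp only [dotProduct, star_sum, star_mul', star_star, Pi.star_apply]
  exact Finset.sum_congr rfl fun i _ => mul_comm _ _

lemma vvmul {n : Type*} [Fintype n] (w v z : n → ℂ) :
    Matrix.vecMulVec w v *ᵥ z = (v ⬝ᵥ z) • w := by
  funext i
  simp only [Matrix.mulVec, Matrix.vecMulVec_apply, dotProduct, Pi.smul_apply, smul_eq_mul,
    Finset.sum_mul]
  exact Finset.sum_congr rfl fun j _ => by ring

lemma dot_herm {n : Type*} [Fintype n] {M : Matrix n n ℂ} (hM : M.IsHermitian)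
    (a b : n → ℂ) : star a ⬝ᵥ M *ᵥ b = star (star b ⬝ᵥ M *ᵥ a) := by
  simp only [dotProduct, mulVec, Pi.star_apply, star_sum, star_mul', star_star, dotProduct,
    Finset.mul_sum]
  rw [Finset.sum_comm]
  refine Finset.sum_congr rfl fun j _ => Finset.sum_congr rfl fun i _ => ?_
  rw [← hM.apply j i, star_star]
  ring

lemma posSemidef_sum {n ι : Type*} [Fintype n] (S : Finset ι) (f : ι → Matrix n n ℂ)
    (hf : ∀ i ∈ S, (f i).PosSemidef) : (∑ i ∈ S, f i).PosSemidef := by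
  induction S using Finset.cons_induction with
  | empty => simpa using Matrix.PosSemidef.zero
  | cons a S ha ih =>
    rw [Finset.sum_cons]
    exact ((hf a (Finset.mem_cons_self a S)).add (ih fun i hi => hf i (Finset.mem_cons_of_mem hi)))

lemma rank_one_absorb {n : Type*} [Fintype n] [DecidableEq n] (x : n → ℂ)
    (hx : star x ⬝ᵥ x ≠ 0) {P : Matrix n n ℂ} (hP : P.PosSemidef)
    (hQ : (Matrix.vecMulVec x (star x) - P).PosSemidef) :
    ∃ c : ℂ, P = c • Matrix.vecMulVec x (star x) := by
  set n0 : ℂ := star x ⬝ᵥ x with hn0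
  have key : ∀ v, star x ⬝ᵥ v = 0 → P *ᵥ v = 0 := by
    intro v hv
    have h4 : star v ⬝ᵥ (Matrix.vecMulVec x (star x)) *ᵥ v = 0 := by
      rw [vvmul, dotProduct_smul, hv]
      simp
    have h2 := hQ.dotProduct_mulVec_nonneg v
    rw [Matrix.sub_mulVec, dotProduct_sub, h4, zero_sub] at h2
    have h3 := hP.dotProduct_mulVec_nonneg v
    have h5 : star v ⬝ᵥ P *ᵥ v = 0 := le_antisymm (neg_nonneg.mp h2) h3
    exact (hP.dotProduct_mulVec_zero_iff v).mp h5
  set c0 : ℂ := (star x ⬝ᵥ P *ᵥ x) / n0 with hc0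
  have hPx : P *ᵥ x = c0 • x := by
    set u : n → ℂ := P *ᵥ x - c0 • x with hu
    have hxu : star x ⬝ᵥ u = 0 := by
      rw [hu, dotProduct_sub, dotProduct_smul, ← hn0, hc0, smul_eq_mul,
        div_mul_cancel₀ _ hx, sub_self]
    have hPu : P *ᵥ u = 0 := key u hxu
    have h1 : star u ⬝ᵥ (P *ᵥ x) = 0 := by
      rw [dot_herm hP.1, hPu]
      simp
    have h2 : star u ⬝ᵥ x = 0 := by
      rw [star_dot_swap, hxu, star_zero]
    have hu0 : star u ⬝ᵥ u = 0 := by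
      rw [hu]
      rw [dotProduct_sub, dotProduct_smul, ← hu, h1, h2]
      simp
    have : u = 0 := dotProduct_star_self_eq_zero.mp hu0
    rw [hu, sub_eq_zero] at this
    exact this
  refine ⟨c0 / n0, ?_⟩
  ext i j
  have hv : star x ⬝ᵥ (Pi.single j 1 - (star (x j) / n0) • x) = 0 := by
    rw [dotProduct_sub, dotProduct_smul, ← hn0, dotProduct_single, smul_eq_mul,
      div_mul_cancel₀ _ hx, mul_one]
    simp
  have h0 := key _ hv
  rw [Matrix.mulVec_sub, Matrix.mulVec_smul, sub_eq_zero, Matrix.mulVec_single_one, hPx] at h0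
  have := congrFun h0 i
  simp only [Pi.smul_apply, smul_eq_mul, mul_one, Matrix.col_apply] at this
  rw [this]
  simp only [Matrix.smul_apply, Matrix.vecMulVec_apply, Pi.star_apply, smul_eq_mul]
  ring

lemma one_sub_mul_star_ne {w : ℂ} (h : ‖w‖ < 1) : (1 : ℂ) - w * star w ≠ 0 := by
  have h1 : w * star w = ((‖w‖ ^ 2 : ℝ) : ℂ) := by
    rw [RCLike.star_def, Complex.mul_conj]
    norm_cast
    rw [Complex.normSq_eq_norm_sq]
  rw [h1]
  have h2 : (0:ℝ) < 1 - ‖w‖ ^ 2 := by nlinarith [norm_nonneg w]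
  intro hc
  have : ((1 - ‖w‖ ^ 2 : ℝ) : ℂ) = 0 := by push_cast at hc ⊢; linear_combination hc
  rw [Complex.ofReal_eq_zero] at this
  linarith

lemma pair_indep {d : ℕ} {ψ φ : Fin d → ℂ} {w : ℂ}
    (hw : star ψ ⬝ᵥ φ = w) (hψ1 : star ψ ⬝ᵥ ψ = 1) (hφ1 : star φ ⬝ᵥ φ = 1)
    (hover : ‖w‖ < 1) :
    ∀ α β : ℂ, α • ψ + β • φ = 0 → α = 0 ∧ β = 0 := by
  have hwφψ : star φ ⬝ᵥ ψ = star w := by rw [star_dot_swap, hw]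
  have hne := one_sub_mul_star_ne hover
  intro α β h0
  have e1 : α + β * w = 0 := by
    have := congrArg (fun v => star ψ ⬝ᵥ v) h0
    simpa [dotProduct_add, dotProduct_smul, hψ1, hw, smul_eq_mul] using this
  have e2 : α * star w + β = 0 := by
    have := congrArg (fun v => star φ ⬝ᵥ v) h0
    simpa [dotProduct_add, dotProduct_smul, hφ1, hwφψ, smul_eq_mul] using this
  have hβ0 : β * (1 - w * star w) = 0 := by linear_combination e2 - star w * e1
  have hβ : β = 0 := (mul_eq_zero.mp hβ0).resolve_right hne
  exact ⟨by linear_combination e1 - w * hβ, hβ⟩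

lemma outer_indep {d : ℕ} {ψ φ : Fin d → ℂ} {w : ℂ}
    (hw : star ψ ⬝ᵥ φ = w) (hψ1 : star ψ ⬝ᵥ ψ = 1) (hφ1 : star φ ⬝ᵥ φ = 1)
    (hover : ‖w‖ < 1) (a b c e : ℂ)
    (h : a • Matrix.vecMulVec ψ (star ψ) + b • Matrix.vecMulVec φ (star φ)
       + c • Matrix.vecMulVec ψ (star φ) + e • Matrix.vecMulVec φ (star ψ) = 0) :
    a = 0 ∧ b = 0 ∧ c = 0 ∧ e = 0 := by
  have hind := pair_indep hw hψ1 hφ1 hover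
  have hwφψ : star φ ⬝ᵥ ψ = star w := by rw [star_dot_swap, hw]
  have hne := one_sub_mul_star_ne hover
  have h1 := congrArg (fun M => M *ᵥ ψ) h
  have h2 := congrArg (fun M => M *ᵥ φ) h
  simp only [Matrix.add_mulVec, Matrix.smul_mulVec, vvmul, hψ1, hφ1, hw, hwφψ,
    Matrix.zero_mulVec, smul_smul, one_smul] at h1 h2
  have h1' : (a + c * star w) • ψ + (b * star w + e) • φ = 0 := by
    funext i
    have := congrFun h1 i
    simp only [Pi.add_apply, Pi.smul_apply, smul_eq_mul, Pi.zero_apply] at this ⊢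
    linear_combination this
  have h2' : (a * w + c) • ψ + (b + e * w) • φ = 0 := by
    funext i
    have := congrFun h2 i
    simp only [Pi.add_apply, Pi.smul_apply, smul_eq_mul, Pi.zero_apply] at this ⊢
    linear_combination this
  obtain ⟨A1, B1⟩ := hind _ _ h1'
  obtain ⟨A2, B2⟩ := hind _ _ h2'
  have ha : a * (1 - w * star w) = 0 := by linear_combination A1 - star w * A2
  have ha0 : a = 0 := (mul_eq_zero.mp ha).resolve_right hne
  have hb : b * (1 - w * star w) = 0 := by linear_combination B2 - w * B1
  have hb0 : b = 0 := (mul_eq_zero.mp hb).resolve_right hne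
  exact ⟨ha0, hb0, by linear_combination A2 - w * ha0, by linear_combination B1 - star w * hb0⟩

lemma choi_expand {α β : Type*} [Fintype α] [DecidableEq α] [Fintype β]
    (E : Matrix α α ℂ →ₗ[ℂ] Matrix β β ℂ)
    (A : Matrix α α ℂ) (p q : β) :
    E A p q = ∑ a : α, ∑ b : α, A a b * choi E (a, p) (b, q) := by
  conv_lhs => rw [Matrix.matrix_eq_sum_single A]
  rw [map_sum]
  rw [Matrix.sum_apply]
  refine Finset.sum_congr rfl fun a _ => ?_
  rw [map_sum, Matrix.sum_apply]
  refine Finset.sum_congr rfl fun b _ => ?_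
  have : Matrix.single a b (A a b) = (A a b) • Matrix.single a b 1 := by
    rw [Matrix.smul_single, smul_eq_mul, mul_one]
  rw [this, _root_.map_smul, Matrix.smul_apply, smul_eq_mul]
  rfl

lemma slice_psd {α γ κ : Type*} [Fintype α] [DecidableEq α] [Fintype γ] [Fintype κ]
    [DecidableEq γ] [DecidableEq κ]
    (E : Matrix α α ℂ →ₗ[ℂ] Matrix (γ × κ) (γ × κ) ℂ)
    (hCP : (choi E).PosSemidef) (x : α → ℂ) (k : κ) :
    (Matrix.of fun i j : γ => E (Matrix.vecMulVec x (star x)) (i, k) (j, k)).PosSemidef := by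
  set Y : Matrix (α × (γ × κ)) γ ℂ :=
    Matrix.of (fun p j => star (x p.1) * (if p.2 = (j, k) then 1 else 0)) with hY
  have key := hCP.conjTranspose_mul_mul_same Y
  have hEq : (Matrix.of fun i j : γ => E (Matrix.vecMulVec x (star x)) (i, k) (j, k))
      = Yᴴ * choi E * Y := by
    ext i j
    rw [Matrix.of_apply, choi_expand E _ (i,k) (j,k)]
    simp only [Matrix.mul_apply, Matrix.conjTranspose_apply, hY, Matrix.of_apply,
      star_mul', star_star, apply_ite (star (R := ℂ)), star_one, star_zero, Finset.sum_mul,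
      mul_ite, ite_mul, mul_one, one_mul, mul_zero, zero_mul]
    rw [Fintype.sum_prod_type]
    simp only [Fintype.sum_prod_type, Finset.sum_ite_eq', Finset.mem_univ, if_true]
    rw [Finset.sum_comm]
    refine Finset.sum_congr rfl fun a _ => Finset.sum_congr rfl fun b _ => ?_
    rw [Matrix.vecMulVec_apply, Pi.star_apply]
    ring
  rw [hEq]
  exact key

/-- no perfect non-disturbing discrimination of non-orthogonal pure states:
if `E : M_d(ℂ) → M_d(ℂ) ⊗ D_m` is a channel with `Tr_C ∘ E = id` and `|ψ⟩, |φ⟩` are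
normalized pure states with `0 < |⟨ψ|φ⟩| < 1`, then the pointer marginals of `E(|ψ⟩⟨ψ|)`
and `E(|φ⟩⟨φ|)` are equal. -/
theorem stmt14 (d m : ℕ)
    (E : Matrix (Fin d) (Fin d) ℂ →ₗ[ℂ] Matrix (Fin d × Fin m) (Fin d × Fin m) ℂ)
    (hCP : (choi E).PosSemidef)
    (hTP : ∀ A, (E A).trace = A.trace)
    (hDiag : ∀ A (p q : Fin d × Fin m), p.2 ≠ q.2 → E A p q = 0)
    (hLeak : ∀ A, ptr2 (E A) = A)
    (ψ φ : Fin d → ℂ)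
    (hψ : ∑ i, star (ψ i) * ψ i = 1) (hφ : ∑ i, star (φ i) * φ i = 1)
    (hover₁ : 0 < ‖∑ i, star (ψ i) * φ i‖) (hover₂ : ‖∑ i, star (ψ i) * φ i‖ < 1) :
    ptr1 (E (Matrix.vecMulVec ψ (star ψ))) = ptr1 (E (Matrix.vecMulVec φ (star φ))) := by
  classical
  set w : ℂ := ∑ i, star (ψ i) * φ i with hwdef
  have hwdot : star ψ ⬝ᵥ φ = w := rfl
  have hψ1 : star ψ ⬝ᵥ ψ = 1 := hψ
  have hφ1 : star φ ⬝ᵥ φ = 1 := hφ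
  have hwφψ : star φ ⬝ᵥ ψ = star w := by rw [star_dot_swap, hwdot]
  -- the absorption property for every slice
  have absorb : ∀ x : Fin d → ℂ, star x ⬝ᵥ x ≠ 0 → ∀ k : Fin m,
      ∃ c : ℂ, (Matrix.of fun i j => E (Matrix.vecMulVec x (star x)) (i, k) (j, k))
        = c • Matrix.vecMulVec x (star x) := by
    intro x hx k
    have hpsd : ∀ k' : Fin m,
        (Matrix.of fun i j => E (Matrix.vecMulVec x (star x)) (i, k') (j, k')).PosSemidef :=
      fun k' => slice_psd E hCP x k'
    have hsum : (∑ k' : Fin m,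
        Matrix.of fun i j => E (Matrix.vecMulVec x (star x)) (i, k') (j, k'))
        = Matrix.vecMulVec x (star x) := by
      ext i j
      rw [Matrix.sum_apply]
      exact congrFun (congrFun (hLeak (Matrix.vecMulVec x (star x))) i) j
    have hcomp : (Matrix.vecMulVec x (star x)
        - Matrix.of fun i j => E (Matrix.vecMulVec x (star x)) (i, k) (j, k)).PosSemidef := by
      have heq : Matrix.vecMulVec x (star x)
          - (Matrix.of fun i j => E (Matrix.vecMulVec x (star x)) (i, k) (j, k))
          = ∑ k' ∈ Finset.univ.erase k,
              Matrix.of fun i j => E (Matrix.vecMulVec x (star x)) (i, k') (j, k') := by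
        have h := Finset.add_sum_erase Finset.univ
          (fun k' : Fin m =>
            Matrix.of fun i j => E (Matrix.vecMulVec x (star x)) (i, k') (j, k'))
          (Finset.mem_univ k)
        have h2 := h.trans hsum
        exact sub_eq_of_eq_add' h2.symm
      rw [heq]
      exact posSemidef_sum _ _ (fun k' _ => hpsd k')
    exact rank_one_absorb x hx (hpsd k) hcomp
  -- nonvanishing norms
  have hψ0 : star ψ ⬝ᵥ ψ ≠ 0 := by rw [hψ1]; exact one_ne_zero
  have hφ0 : star φ ⬝ᵥ φ ≠ 0 := by rw [hφ1]; exact one_ne_zero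
  set u : Fin d → ℂ := ψ + φ with hu
  set v : Fin d → ℂ := ψ + (2:ℂ) • φ with hv
  have hrew : -(1:ℝ) < w.re := by
    have h1 : |w.re| ≤ ‖w‖ := Complex.abs_re_le_norm w
    have h2 : -|w.re| ≤ w.re := neg_abs_le _
    linarith
  have hudot : star u ⬝ᵥ u = 1 + w + (star w + 1) := by
    rw [hu]
    simp only [star_add, dotProduct_add, add_dotProduct, hψ1, hφ1, hwdot, hwφψ]
    ring
  have hvdot : star v ⬝ᵥ v = 1 + 2 * w + (2 * star w + 4) := by
    rw [hv]
    simp only [star_add, star_smul, dotProduct_add, add_dotProduct, smul_dotProduct,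
      dotProduct_smul, hψ1, hφ1, hwdot, hwφψ, smul_eq_mul, star_ofNat]
    ring
  have hre_ne : ∀ z : ℂ, 0 < z.re → z ≠ 0 := by
    intro z hz h
    rw [h] at hz
    simp at hz
  have hsw : (star w).re = w.re := by
    rw [Complex.star_def, Complex.conj_re]
  have hu0 : star u ⬝ᵥ u ≠ 0 := by
    apply hre_ne
    rw [hudot]
    simp only [Complex.add_re, Complex.one_re, hsw]
    linarith
  have hv0 : star v ⬝ᵥ v ≠ 0 := by
    apply hre_ne
    rw [hvdot]
    simp only [Complex.add_re, Complex.one_re, Complex.mul_re, Complex.re_ofNat,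
      Complex.im_ofNat, Complex.ofReal_re]
    have : (star w).im = -w.im := by rw [Complex.star_def, Complex.conj_im]
    rw [hsw, this]
    norm_num
    linarith
  -- the pointwise claim: the pointer weights agree
  have main : ∀ k : Fin m, ∃ c : ℂ,
      (Matrix.of fun i j => E (Matrix.vecMulVec ψ (star ψ)) (i, k) (j, k))
        = c • Matrix.vecMulVec ψ (star ψ) ∧
      (Matrix.of fun i j => E (Matrix.vecMulVec φ (star φ)) (i, k) (j, k))
        = c • Matrix.vecMulVec φ (star φ) := by
    intro k
    obtain ⟨p, hp⟩ := absorb ψ hψ0 k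
    obtain ⟨q, hq⟩ := absorb φ hφ0 k
    obtain ⟨r, hr⟩ := absorb u hu0 k
    obtain ⟨s, hs⟩ := absorb v hv0 k
    -- linearity expansions
    have hobu : Matrix.vecMulVec u (star u)
        = Matrix.vecMulVec ψ (star ψ) + Matrix.vecMulVec φ (star φ)
          + Matrix.vecMulVec ψ (star φ) + Matrix.vecMulVec φ (star ψ) := by
      ext i j
      simp only [hu, Matrix.add_apply, Matrix.vecMulVec_apply, Pi.add_apply, Pi.star_apply,
        star_add]
      ring
    have hobv : Matrix.vecMulVec v (star v)
        = Matrix.vecMulVec ψ (star ψ) + (4:ℂ) • Matrix.vecMulVec φ (star φ)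
          + (2:ℂ) • Matrix.vecMulVec ψ (star φ) + (2:ℂ) • Matrix.vecMulVec φ (star ψ) := by
      ext i j
      simp only [hv, Matrix.add_apply, Matrix.smul_apply, Matrix.vecMulVec_apply, Pi.add_apply,
        Pi.smul_apply, Pi.star_apply, star_add, star_mul', smul_eq_mul, star_ofNat]
      ring
    have hEu : E (Matrix.vecMulVec u (star u))
        = E (Matrix.vecMulVec ψ (star ψ)) + E (Matrix.vecMulVec φ (star φ))
          + E (Matrix.vecMulVec ψ (star φ)) + E (Matrix.vecMulVec φ (star ψ)) := by
      rw [hobu, map_add, map_add, map_add]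
    have hEv : E (Matrix.vecMulVec v (star v))
        = E (Matrix.vecMulVec ψ (star ψ)) + (4:ℂ) • E (Matrix.vecMulVec φ (star φ))
          + (2:ℂ) • E (Matrix.vecMulVec ψ (star φ)) + (2:ℂ) • E (Matrix.vecMulVec φ (star ψ)) := by
      rw [hobv, map_add, map_add, map_add, _root_.map_smul, _root_.map_smul, _root_.map_smul]
    -- the combination that vanishes
    have hcombo : (s - 2*r + p) • Matrix.vecMulVec ψ (star ψ)
        + (4*s - 2*r - 2*q) • Matrix.vecMulVec φ (star φ)
        + (2*s - 2*r) • Matrix.vecMulVec ψ (star φ)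
        + (2*s - 2*r) • Matrix.vecMulVec φ (star ψ) = 0 := by
      ext i j
      have hpij := congrFun (congrFun hp i) j
      have hqij := congrFun (congrFun hq i) j
      have hrij := congrFun (congrFun hr i) j
      have hsij := congrFun (congrFun hs i) j
      have hEuij := congrFun (congrFun hEu (i, k)) (j, k)
      have hEvij := congrFun (congrFun hEv (i, k)) (j, k)
      simp only [Matrix.of_apply, Matrix.smul_apply, Matrix.add_apply, Matrix.vecMulVec_apply,
        Pi.star_apply, Pi.add_apply, Pi.smul_apply, smul_eq_mul, star_add, star_mul', star_ofNat,
        hu, hv, Matrix.zero_apply] at hpij hqij hrij hsij hEuij hEvij ⊢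
      linear_combination (-1 : ℂ) * hsij + 2*hrij - hpij + 2*hqij + hEvij - 2*hEuij
    obtain ⟨ha, hb, hc, -⟩ := outer_indep hwdot hψ1 hφ1 hover₂ _ _ _ _ hcombo
    have hsr : s = r := by linear_combination hc / 2
    have hpr : p = r := by linear_combination ha - hc/2
    have hqr : q = r := by linear_combination hc - hb/2
    exact ⟨r, by rw [← hpr]; exact hp, by rw [← hqr]; exact hq⟩
  -- conclude
  ext k k'
  show ∑ i, E (Matrix.vecMulVec ψ (star ψ)) (i, k) (i, k')
      = ∑ i, E (Matrix.vecMulVec φ (star φ)) (i, k) (i, k')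
  by_cases hkk : k = k'
  · subst hkk
    obtain ⟨c, hcψ, hcφ⟩ := main k
    have e1 : ∀ i, E (Matrix.vecMulVec ψ (star ψ)) (i, k) (i, k) = c * (ψ i * star (ψ i)) := by
      intro i
      have := congrFun (congrFun hcψ i) i
      simpa [Matrix.smul_apply, Matrix.vecMulVec_apply, smul_eq_mul] using this
    have e2 : ∀ i, E (Matrix.vecMulVec φ (star φ)) (i, k) (i, k) = c * (φ i * star (φ i)) := by
      intro i
      have := congrFun (congrFun hcφ i) i
      simpa [Matrix.smul_apply, Matrix.vecMulVec_apply, smul_eq_mul] using this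
    rw [Finset.sum_congr rfl fun i _ => e1 i, Finset.sum_congr rfl fun i _ => e2 i,
      ← Finset.mul_sum, ← Finset.mul_sum]
    have s1 : ∑ i, ψ i * star (ψ i) = 1 := by
      rw [← hψ]
      exact Finset.sum_congr rfl fun i _ => mul_comm _ _
    have s2 : ∑ i, φ i * star (φ i) = 1 := by
      rw [← hφ]
      exact Finset.sum_congr rfl fun i _ => mul_comm _ _
    rw [s1, s2]
  · refine Finset.sum_congr rfl fun i _ => ?_
    rw [hDiag _ (i, k) (i, k') hkk, hDiag _ (i, k) (i, k') hkk]

end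
end
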